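/- arXiv:1407.2870 — 4 statements merged into one kernel-verified Lean document; each statement's English description precedes it below -/
import Mathlib

section
/- There exist real numbers λ₁ ∈ (−1/2, 0) and λ₂ ∈ (−5/4, −1) such that ∫₀^{1/2} (x + λ₁) / ( √x · √(2−x) · √(1/2 − x) ) dx = 0 and ∫_{1/2}^{2} (x + λ₂) / ( √x · √(2−x) · √(x − 1/2) ) dx = 0 (both integrals being convergent improper Riemann/Lebesgue integrals). -/
open MeasureTheory intervalIntegral

noncomputable def d2 (x : ℝ) : ℝ := Real.sqrt x * Real.sqrt (2 - x) * Real.sqrt (x - 1 / 2)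
noncomputable def d1 (x : ℝ) : ℝ := Real.sqrt x * Real.sqrt (2 - x) * Real.sqrt (1 / 2 - x)

lemma d2_meas : Measurable d2 := by unfold d2; fun_prop
lemma d1_meas : Measurable d1 := by unfold d1; fun_prop

lemma d2_nonneg (x : ℝ) : 0 ≤ d2 x :=
  mul_nonneg (mul_nonneg (Real.sqrt_nonneg _) (Real.sqrt_nonneg _)) (Real.sqrt_nonneg _)
lemma d1_nonneg (x : ℝ) : 0 ≤ d1 x :=
  mul_nonneg (mul_nonneg (Real.sqrt_nonneg _) (Real.sqrt_nonneg _)) (Real.sqrt_nonneg _)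

lemma d2_pos {x : ℝ} (h1 : 1/2 < x) (h2 : x < 2) : 0 < d2 x := by
  have := Real.sqrt_pos.mpr (show (0:ℝ) < x by linarith)
  have := Real.sqrt_pos.mpr (show (0:ℝ) < 2 - x by linarith)
  have := Real.sqrt_pos.mpr (show (0:ℝ) < x - 1/2 by linarith)
  unfold d2; positivity

lemma d1_pos {x : ℝ} (h1 : 0 < x) (h2 : x < 1/2) : 0 < d1 x := by
  have := Real.sqrt_pos.mpr h1
  have := Real.sqrt_pos.mpr (show (0:ℝ) < 2 - x by linarith)
  have := Real.sqrt_pos.mpr (show (0:ℝ) < 1/2 - x by linarith)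
  unfold d1; positivity

/-- half-lower bound for a product of two sqrts -/
lemma sqrt_mul_half {u v : ℝ} (hu : 0 ≤ u) (h : 1/4 ≤ u * v) :
    1/2 ≤ Real.sqrt u * Real.sqrt v := by
  rw [← Real.sqrt_mul hu]
  have : Real.sqrt (1/4) ≤ Real.sqrt (u * v) := Real.sqrt_le_sqrt h
  rwa [show (1/4 : ℝ) = (1/2)^2 by norm_num, Real.sqrt_sq (by norm_num)] at this

section sing_helpers
-- copy of the helper lemmas
lemma sing_left {f : ℝ → ℝ} {a b C : ℝ} (hab : a ≤ b) (hm : Measurable f)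
    (h : ∀ x ∈ Set.Ioc a b, |f x| ≤ C / Real.sqrt (x - a)) :
    IntervalIntegrable f volume a b := by
  have h0 : IntervalIntegrable (fun x : ℝ => x ^ (-(1/2) : ℝ)) volume 0 (b - a) :=
    intervalIntegrable_rpow' (by norm_num)
  have h1 : IntervalIntegrable (fun x : ℝ => (x - a) ^ (-(1/2) : ℝ)) volume a b := by
    simpa using h0.comp_sub_right a
  refine (h1.const_mul C).mono_fun (hm.aestronglyMeasurable.restrict) ?_
  rw [Set.uIoc_of_le hab]
  refine (ae_restrict_iff' measurableSet_Ioc).mpr (Filter.Eventually.of_forall ?_)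
  intro x hx
  have hxa : 0 < x - a := by linarith [hx.1]
  have hrw : (x - a) ^ (-(1/2) : ℝ) = (Real.sqrt (x - a))⁻¹ := by
    rw [Real.rpow_neg hxa.le, Real.sqrt_eq_rpow]
  calc ‖f x‖ = |f x| := rfl
    _ ≤ C / Real.sqrt (x - a) := h x hx
    _ = C * (x - a) ^ (-(1/2) : ℝ) := by rw [hrw, div_eq_mul_inv]
    _ ≤ ‖C * (x - a) ^ (-(1/2) : ℝ)‖ := le_abs_self _

lemma sing_right {f : ℝ → ℝ} {a b C : ℝ} (hab : a ≤ b) (hm : Measurable f)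
    (h : ∀ x ∈ Set.Ico a b, |f x| ≤ C / Real.sqrt (b - x)) :
    IntervalIntegrable f volume a b := by
  have h0 : IntervalIntegrable (fun x : ℝ => f (a + b - x)) volume a b := by
    refine sing_left (C := C) hab (by fun_prop) ?_
    intro x hx
    have : a + b - x ∈ Set.Ico a b := by
      constructor <;> [linarith [hx.2]; linarith [hx.1]]
    simpa [show b - (a + b - x) = x - a by ring] using h _ this
  have h1 := h0.comp_sub_left (a + b)
  have h2 : IntervalIntegrable (fun x => f (a + b - (a + b - x))) volume a b := by
    have e1 : a + b - b = a := by ring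
    have e2 : a + b - a = b := by ring
    rw [e1, e2] at h1
    exact h1.symm
  simpa [show ∀ x : ℝ, a + b - (a + b - x) = x from fun x => by ring] using h2
end sing_helpers

/-- Integrability of `ν / d2` on `[1/2, 2]` for bounded measurable `ν`. -/
lemma int_d2 {ν : ℝ → ℝ} (hν : Measurable ν) {C : ℝ}
    (hC : ∀ x ∈ Set.Icc (1/2 : ℝ) 2, |ν x| ≤ C) :
    IntervalIntegrable (fun x => ν x / d2 x) volume (1/2) 2 := by
  have hmeas : Measurable fun x => ν x / d2 x := hν.div d2_meas
  have p1 : IntervalIntegrable (fun x => ν x / d2 x) volume (1/2) (5/4) := by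
    refine sing_left (C := 2 * C) (by norm_num) hmeas ?_
    intro x hx
    obtain ⟨hx1, hx2⟩ := hx
    have hv : 0 < Real.sqrt (x - 1/2) := Real.sqrt_pos.mpr (by linarith)
    have hsu : 1/2 ≤ Real.sqrt x * Real.sqrt (2 - x) :=
      sqrt_mul_half (by linarith) (by nlinarith)
    have hd : 1/2 * Real.sqrt (x - 1/2) ≤ d2 x := by
      unfold d2
      exact mul_le_mul_of_nonneg_right hsu hv.le
    have hb : |ν x| ≤ C := hC x ⟨hx1.le, by linarith⟩
    have habs : |ν x / d2 x| = |ν x| / d2 x := by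
      rw [abs_div, abs_of_nonneg (d2_nonneg x)]
    rw [habs]
    calc |ν x| / d2 x ≤ C / (1/2 * Real.sqrt (x - 1/2)) :=
          div_le_div₀ (le_trans (abs_nonneg _) hb) hb (by positivity) hd
      _ = 2 * C / Real.sqrt (x - 1/2) := by
          field_simp
  have p2 : IntervalIntegrable (fun x => ν x / d2 x) volume (5/4) 2 := by
    refine sing_right (C := 2 * C) (by norm_num) hmeas ?_
    intro x hx
    obtain ⟨hx1, hx2⟩ := hx
    have hu : 0 < Real.sqrt (2 - x) := Real.sqrt_pos.mpr (by linarith)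
    have hsv : 1/2 ≤ Real.sqrt x * Real.sqrt (x - 1/2) :=
      sqrt_mul_half (by linarith) (by nlinarith)
    have hd : 1/2 * Real.sqrt (2 - x) ≤ d2 x := by
      have : d2 x = (Real.sqrt x * Real.sqrt (x - 1/2)) * Real.sqrt (2 - x) := by
        unfold d2; ring
      rw [this]
      exact mul_le_mul_of_nonneg_right hsv hu.le
    have hb : |ν x| ≤ C := hC x ⟨by linarith, hx2.le⟩
    have habs : |ν x / d2 x| = |ν x| / d2 x := by
      rw [abs_div, abs_of_nonneg (d2_nonneg x)]
    rw [habs]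
    calc |ν x| / d2 x ≤ C / (1/2 * Real.sqrt (2 - x)) :=
          div_le_div₀ (le_trans (abs_nonneg _) hb) hb (by positivity) hd
      _ = 2 * C / Real.sqrt (2 - x) := by field_simp
  exact p1.trans p2

/-- Integrability of `ν / d1` on `[0, 1/2]` for bounded measurable `ν`. -/
lemma int_d1 {ν : ℝ → ℝ} (hν : Measurable ν) {C : ℝ}
    (hC : ∀ x ∈ Set.Icc (0 : ℝ) (1/2), |ν x| ≤ C) :
    IntervalIntegrable (fun x => ν x / d1 x) volume 0 (1/2) := by
  have hmeas : Measurable fun x => ν x / d1 x := hν.div d1_meas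
  have p1 : IntervalIntegrable (fun x => ν x / d1 x) volume 0 (1/4) := by
    refine sing_left (C := 2 * C) (by norm_num) hmeas ?_
    intro x hx
    obtain ⟨hx1, hx2⟩ := hx
    have hv : 0 < Real.sqrt x := Real.sqrt_pos.mpr (by linarith)
    have hsu : 1/2 ≤ Real.sqrt (2 - x) * Real.sqrt (1/2 - x) :=
      sqrt_mul_half (by linarith) (by nlinarith)
    have hd : 1/2 * Real.sqrt x ≤ d1 x := by
      have : d1 x = (Real.sqrt (2 - x) * Real.sqrt (1/2 - x)) * Real.sqrt x := by
        unfold d1; ring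
      rw [this]
      exact mul_le_mul_of_nonneg_right hsu hv.le
    have hb : |ν x| ≤ C := hC x ⟨hx1.le, by linarith⟩
    have habs : |ν x / d1 x| = |ν x| / d1 x := by
      rw [abs_div, abs_of_nonneg (d1_nonneg x)]
    rw [habs, show x - 0 = x by ring]
    calc |ν x| / d1 x ≤ C / (1/2 * Real.sqrt x) :=
          div_le_div₀ (le_trans (abs_nonneg _) hb) hb (by positivity) hd
      _ = 2 * C / Real.sqrt x := by field_simp
  have p2 : IntervalIntegrable (fun x => ν x / d1 x) volume (1/4) (1/2) := by
    refine sing_right (C := 2 * C) (by norm_num) hmeas ?_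
    intro x hx
    obtain ⟨hx1, hx2⟩ := hx
    have hu : 0 < Real.sqrt (1/2 - x) := Real.sqrt_pos.mpr (by linarith)
    have hsv : 1/2 ≤ Real.sqrt x * Real.sqrt (2 - x) :=
      sqrt_mul_half (by linarith) (by nlinarith)
    have hd : 1/2 * Real.sqrt (1/2 - x) ≤ d1 x := by
      unfold d1
      exact mul_le_mul_of_nonneg_right hsv hu.le
    have hb : |ν x| ≤ C := hC x ⟨by linarith, hx2.le⟩
    have habs : |ν x / d1 x| = |ν x| / d1 x := by
      rw [abs_div, abs_of_nonneg (d1_nonneg x)]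
    rw [habs]
    calc |ν x| / d1 x ≤ C / (1/2 * Real.sqrt (1/2 - x)) :=
          div_le_div₀ (le_trans (abs_nonneg _) hb) hb (by positivity) hd
      _ = 2 * C / Real.sqrt (1/2 - x) := by field_simp
  exact p1.trans p2
/-- The key pointwise inequality: `(x-1)√(5/2-x) + (3/2-x)√x > 0` on `(1/2, 2)`. -/
lemma coreN {x : ℝ} (h1 : 1/2 < x) (h2 : x < 2) :
    0 < (x - 1) * Real.sqrt (5/2 - x) + (3/2 - x) * Real.sqrt x := by
  set s := Real.sqrt x with hs_def
  set t := Real.sqrt (5/2 - x) with ht_def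
  have hs2 : s ^ 2 = x := Real.sq_sqrt (by linarith)
  have ht2 : t ^ 2 = 5/2 - x := Real.sq_sqrt (by linarith)
  have hs : 0 < s := Real.sqrt_pos.mpr (by linarith)
  have ht : 0 < t := Real.sqrt_pos.mpr (by linarith)
  rcases le_or_gt x 1 with hx | hx
  · have ha : 0 < (3/2 - x) * s := by
      apply mul_pos (by linarith) hs
    have hb : 0 ≤ (1 - x) * t := mul_nonneg (by linarith) ht.le
    have hfac : 0 < 2 * (x - 1/2) * ((5/4 - x) * (2 - x)) := by
      apply mul_pos (by linarith) (mul_pos (by linarith) (by linarith))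
    have hid : ((3/2 - x) * s) ^ 2 - ((1 - x) * t) ^ 2
        = 2 * (x - 1/2) * ((5/4 - x) * (2 - x)) := by
      linear_combination (3/2 - x)^2 * hs2 - (1 - x)^2 * ht2
    have hsq : ((1 - x) * t) ^ 2 < ((3/2 - x) * s) ^ 2 := by linarith
    nlinarith [hsq, ha, hb]
  · rcases le_or_gt x (3/2) with hx2 | hx2
    · have ha : 0 < (x - 1) * t := mul_pos (by linarith) ht
      have hb : 0 ≤ (3/2 - x) * s := mul_nonneg (by linarith) hs.le
      linarith
    · have ha : 0 < (x - 1) * t := mul_pos (by linarith) ht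
      have hb : 0 ≤ (x - 3/2) * s := mul_nonneg (by linarith) hs.le
      have hfac : 0 < 2 * (x - 1/2) * ((x - 5/4) * (2 - x)) := by
        apply mul_pos (by linarith) (mul_pos (by linarith) (by linarith))
      have hid : ((x - 1) * t) ^ 2 - ((x - 3/2) * s) ^ 2
          = 2 * (x - 1/2) * ((x - 5/4) * (2 - x)) := by
        linear_combination (x - 1)^2 * ht2 - (x - 3/2)^2 * hs2
      have hsq : ((x - 3/2) * s) ^ 2 < ((x - 1) * t) ^ 2 := by linarith
      nlinarith [hsq, ha, hb]
lemma hg_int : IntervalIntegrable (fun x => (x - 1) / d2 x) volume (1/2) 2 :=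
  int_d2 (by fun_prop) (C := 1) (fun x hx => abs_le.mpr ⟨by linarith [hx.1], by linarith [hx.2]⟩)

lemma hq_int : IntervalIntegrable (fun x => (5/4 - x) / d2 x) volume (1/2) 2 :=
  int_d2 (by fun_prop) (C := 1) (fun x hx => abs_le.mpr ⟨by linarith [hx.2], by linarith [hx.1]⟩)

lemma refl_int {f : ℝ → ℝ} (hf : IntervalIntegrable f volume (1/2) 2) :
    IntervalIntegrable (fun x => f (5/2 - x)) volume (1/2) 2 := by
  have h := hf.comp_sub_left (5/2)
  norm_num at h
  exact h.symm

lemma refl_eq (f : ℝ → ℝ) :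
    (∫ x in (1/2:ℝ)..2, f (5/2 - x)) = ∫ x in (1/2:ℝ)..2, f x := by
  have h := intervalIntegral.integral_comp_sub_left (a := (1/2:ℝ)) (b := 2) f (5/2)
  rw [show (5:ℝ)/2 - 2 = 1/2 by norm_num, show (5:ℝ)/2 - 1/2 = 2 by norm_num] at h
  exact h

lemma A2_pos : 0 < ∫ x in (1/2:ℝ)..2, (x - 1) / d2 x := by
  have hgr := refl_int hg_int
  have heq := refl_eq (fun x => (x - 1) / d2 x)
  have hpos : 0 < ∫ x in (1/2:ℝ)..2,
      ((x - 1) / d2 x + (5/2 - x - 1) / d2 (5/2 - x)) := by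
    refine intervalIntegral_pos_of_pos_on (hg_int.add hgr) ?_ (by norm_num)
    intro x hx
    obtain ⟨hx1, hx2⟩ := hx
    have hs : 0 < Real.sqrt x := Real.sqrt_pos.mpr (by linarith)
    have hu : 0 < Real.sqrt (2 - x) := Real.sqrt_pos.mpr (by linarith)
    have hv : 0 < Real.sqrt (x - 1/2) := Real.sqrt_pos.mpr (by linarith)
    have ht : 0 < Real.sqrt (5/2 - x) := Real.sqrt_pos.mpr (by linarith)
    have e1 : (2 : ℝ) - (5/2 - x) = x - 1/2 := by ring
    have e2 : (5:ℝ)/2 - x - 1/2 = 2 - x := by ring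
    have hd2r : d2 (5/2 - x) = Real.sqrt (5/2 - x) * Real.sqrt (x - 1/2) * Real.sqrt (2 - x) := by
      unfold d2; rw [e1, e2]
    have hd2 : d2 x = Real.sqrt x * Real.sqrt (2 - x) * Real.sqrt (x - 1/2) := rfl
    rw [hd2r, hd2]
    have hne1 : Real.sqrt x * Real.sqrt (2 - x) * Real.sqrt (x - 1/2) ≠ 0 := by positivity
    have hne2 : Real.sqrt (5/2 - x) * Real.sqrt (x - 1/2) * Real.sqrt (2 - x) ≠ 0 := by positivity
    rw [div_add_div _ _ hne1 hne2]
    apply div_pos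
    · have hcore := coreN hx1 hx2
      nlinarith [mul_pos hu hv, mul_pos (mul_pos hu hv)
        (coreN hx1 hx2), sq_nonneg (Real.sqrt (2-x))]
    · positivity
  have hadd := intervalIntegral.integral_add hg_int hgr
  have h2 : (∫ x in (1/2:ℝ)..2, ((x - 1) / d2 x + (5/2 - x - 1) / d2 (5/2 - x)))
      = 2 * ∫ x in (1/2:ℝ)..2, (x - 1) / d2 x := by
    rw [hadd, heq]; ring
  rw [h2] at hpos
  linarith
lemma B2_pos : 0 < ∫ x in (1/2:ℝ)..2, (5/4 - x) / d2 x := by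
  have hqr := refl_int hq_int
  have heq := refl_eq (fun x => (5/4 - x) / d2 x)
  have hw : IntervalIntegrable
      (fun x => (5/4 - x) / d2 x + (5/4 - (5/2 - x)) / d2 (5/2 - x)) volume (1/2) 2 :=
    hq_int.add hqr
  have hsub1 : Set.uIcc (1/2:ℝ) (5/4) ⊆ Set.uIcc (1/2:ℝ) 2 := by
    apply Set.uIcc_subset_uIcc <;> rw [Set.mem_uIcc] <;> norm_num
  have hsub2 : Set.uIcc (5/4:ℝ) 2 ⊆ Set.uIcc (1/2:ℝ) 2 := by
    apply Set.uIcc_subset_uIcc <;> rw [Set.mem_uIcc] <;> norm_num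
  have hw1 := hw.mono_set hsub1
  have hw2 := hw.mono_set hsub2
  have pos1 : 0 < ∫ x in (1/2:ℝ)..(5/4),
      ((5/4 - x) / d2 x + (5/4 - (5/2 - x)) / d2 (5/2 - x)) := by
    refine intervalIntegral_pos_of_pos_on hw1 ?_ (by norm_num)
    intro x hx
    obtain ⟨hx1, hx2⟩ := hx
    have hs : 0 < Real.sqrt x := Real.sqrt_pos.mpr (by linarith)
    have hu : 0 < Real.sqrt (2 - x) := Real.sqrt_pos.mpr (by linarith)
    have hv : 0 < Real.sqrt (x - 1/2) := Real.sqrt_pos.mpr (by linarith)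
    have ht : 0 < Real.sqrt (5/2 - x) := Real.sqrt_pos.mpr (by linarith)
    have hst : Real.sqrt x < Real.sqrt (5/2 - x) :=
      Real.sqrt_lt_sqrt (by linarith) (by linarith)
    have e1 : (2 : ℝ) - (5/2 - x) = x - 1/2 := by ring
    have e2 : (5:ℝ)/2 - x - 1/2 = 2 - x := by ring
    have hd2r : d2 (5/2 - x) = Real.sqrt (5/2 - x) * Real.sqrt (x - 1/2) * Real.sqrt (2 - x) := by
      unfold d2; rw [e1, e2]
    have hd2 : d2 x = Real.sqrt x * Real.sqrt (2 - x) * Real.sqrt (x - 1/2) := rfl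
    rw [hd2r, hd2]
    have hne1 : Real.sqrt x * Real.sqrt (2 - x) * Real.sqrt (x - 1/2) ≠ 0 := by positivity
    have hne2 : Real.sqrt (5/2 - x) * Real.sqrt (x - 1/2) * Real.sqrt (2 - x) ≠ 0 := by positivity
    rw [div_add_div _ _ hne1 hne2]
    apply div_pos
    · nlinarith [mul_pos (mul_pos hu hv)
        (mul_pos (show (0:ℝ) < 5/4 - x by linarith) (sub_pos.mpr hst))]
    · positivity
  have nonneg2 : 0 ≤ ∫ x in (5/4:ℝ)..2,
      ((5/4 - x) / d2 x + (5/4 - (5/2 - x)) / d2 (5/2 - x)) := by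
    refine intervalIntegral.integral_nonneg (by norm_num) ?_
    intro x hx
    obtain ⟨hx1, hx2⟩ := hx
    rcases eq_or_lt_of_le hx2 with hx2 | hx2
    · rw [hx2]
      have hz1 : d2 2 = 0 := by
        unfold d2; rw [show (2:ℝ) - 2 = 0 by norm_num, Real.sqrt_zero]; ring
      have hz2 : d2 (5/2 - 2) = 0 := by
        unfold d2; rw [show (5:ℝ)/2 - 2 - 1/2 = 0 by norm_num, Real.sqrt_zero]; ring
      rw [hz1, hz2, div_zero, div_zero]; norm_num
    · have hs : 0 < Real.sqrt x := Real.sqrt_pos.mpr (by linarith)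
      have hu : 0 < Real.sqrt (2 - x) := Real.sqrt_pos.mpr (by linarith)
      have hv : 0 < Real.sqrt (x - 1/2) := Real.sqrt_pos.mpr (by linarith)
      have ht : 0 < Real.sqrt (5/2 - x) := Real.sqrt_pos.mpr (by linarith)
      have hst : Real.sqrt (5/2 - x) ≤ Real.sqrt x :=
        Real.sqrt_le_sqrt (by linarith)
      have e1 : (2 : ℝ) - (5/2 - x) = x - 1/2 := by ring
      have e2 : (5:ℝ)/2 - x - 1/2 = 2 - x := by ring
      have hd2r : d2 (5/2 - x) = Real.sqrt (5/2 - x) * Real.sqrt (x - 1/2) * Real.sqrt (2 - x) := by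
        unfold d2; rw [e1, e2]
      have hd2 : d2 x = Real.sqrt x * Real.sqrt (2 - x) * Real.sqrt (x - 1/2) := rfl
      rw [hd2r, hd2]
      have hne1 : Real.sqrt x * Real.sqrt (2 - x) * Real.sqrt (x - 1/2) ≠ 0 := by positivity
      have hne2 : Real.sqrt (5/2 - x) * Real.sqrt (x - 1/2) * Real.sqrt (2 - x) ≠ 0 := by positivity
      rw [div_add_div _ _ hne1 hne2]
      apply div_nonneg
      · have hkey : 0 ≤ (x - 5/4) * (Real.sqrt x - Real.sqrt (5/2 - x)) :=
          mul_nonneg (by linarith) (by linarith [hst])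
        nlinarith [mul_nonneg (mul_nonneg hu.le hv.le) hkey]
      · positivity
  have hsplit := intervalIntegral.integral_add_adjacent_intervals hw1 hw2
  have hadd := intervalIntegral.integral_add hq_int hqr
  have h2 : (∫ x in (1/2:ℝ)..2, ((5/4 - x) / d2 x + (5/4 - (5/2 - x)) / d2 (5/2 - x)))
      = 2 * ∫ x in (1/2:ℝ)..2, (5/4 - x) / d2 x := by
    rw [hadd, heq]; ring
  have : 0 < (∫ x in (1/2:ℝ)..2, ((5/4 - x) / d2 x + (5/4 - (5/2 - x)) / d2 (5/2 - x))) := by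
    rw [← hsplit]; linarith
  rw [h2] at this
  linarith
-- Part 1 integrability and positivity
lemma hJ1_int : IntervalIntegrable (fun x => 1 / d1 x) volume 0 (1/2) :=
  int_d1 measurable_const (C := 1) (fun x _ => by norm_num)

lemma hI1_int : IntervalIntegrable (fun x => x / d1 x) volume 0 (1/2) :=
  int_d1 measurable_id (C := 1/2)
    (fun x hx => abs_le.mpr ⟨by linarith [hx.1], by linarith [hx.2]⟩)

lemma hK1_int : IntervalIntegrable (fun x => (1/2 - x) / d1 x) volume 0 (1/2) :=
  int_d1 (by fun_prop) (C := 1/2)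
    (fun x hx => abs_le.mpr ⟨by linarith [hx.2], by linarith [hx.1]⟩)

lemma J1_pos : 0 < ∫ x in (0:ℝ)..(1/2), 1 / d1 x := by
  refine intervalIntegral_pos_of_pos_on hJ1_int ?_ (by norm_num)
  intro x hx
  exact one_div_pos.mpr (d1_pos hx.1 hx.2)

lemma I1_pos : 0 < ∫ x in (0:ℝ)..(1/2), x / d1 x := by
  refine intervalIntegral_pos_of_pos_on hI1_int ?_ (by norm_num)
  intro x hx
  exact div_pos hx.1 (d1_pos hx.1 hx.2)

lemma K1_pos : 0 < ∫ x in (0:ℝ)..(1/2), (1/2 - x) / d1 x := by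
  refine intervalIntegral_pos_of_pos_on hK1_int ?_ (by norm_num)
  intro x hx
  exact div_pos (by linarith [hx.2]) (d1_pos hx.1 hx.2)

lemma K1_eq : (∫ x in (0:ℝ)..(1/2), (1/2 - x) / d1 x)
    = 1/2 * (∫ x in (0:ℝ)..(1/2), 1 / d1 x) - ∫ x in (0:ℝ)..(1/2), x / d1 x := by
  have hfe : (fun x => (1/2 - x) / d1 x)
      = fun x => 1/2 * (1 / d1 x) - x / d1 x := by
    funext x
    rw [sub_div, mul_one_div]
  rw [hfe, intervalIntegral.integral_sub (hJ1_int.const_mul (1/2)) hI1_int,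
    intervalIntegral.integral_const_mul]

-- Part 2 integrability and positivity
lemma hJ2_int : IntervalIntegrable (fun x => 1 / d2 x) volume (1/2) 2 :=
  int_d2 measurable_const (C := 1) (fun x _ => by norm_num)

lemma hI2_int : IntervalIntegrable (fun x => x / d2 x) volume (1/2) 2 :=
  int_d2 measurable_id (C := 2)
    (fun x hx => abs_le.mpr ⟨by linarith [hx.1], by linarith [hx.2]⟩)

lemma J2_pos : 0 < ∫ x in (1/2:ℝ)..2, 1 / d2 x := by
  refine intervalIntegral_pos_of_pos_on hJ2_int ?_ (by norm_num)
  intro x hx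
  exact one_div_pos.mpr (d2_pos hx.1 hx.2)

lemma A2_eq : (∫ x in (1/2:ℝ)..2, (x - 1) / d2 x)
    = (∫ x in (1/2:ℝ)..2, x / d2 x) - ∫ x in (1/2:ℝ)..2, 1 / d2 x := by
  have hfe : (fun x => (x - 1) / d2 x) = fun x => x / d2 x - 1 / d2 x := by
    funext x; rw [sub_div]
  rw [hfe, intervalIntegral.integral_sub hI2_int hJ2_int]

lemma B2_eq : (∫ x in (1/2:ℝ)..2, (5/4 - x) / d2 x)
    = 5/4 * (∫ x in (1/2:ℝ)..2, 1 / d2 x) - ∫ x in (1/2:ℝ)..2, x / d2 x := by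
  have hfe : (fun x => (5/4 - x) / d2 x)
      = fun x => 5/4 * (1 / d2 x) - x / d2 x := by
    funext x; rw [sub_div, mul_one_div]
  rw [hfe, intervalIntegral.integral_sub (hJ2_int.const_mul (5/4)) hI2_int,
    intervalIntegral.integral_const_mul]


/-- Period-closing conditions for the harmonic torus with one end of type
`(0,0,1)` and one end of type `(2,2,1)`: there exist `λ₁ ∈ (-1/2, 0)` and
`λ₂ ∈ (-5/4, -1)` making the two period integrals vanish. -/
theorem stmt_16 :
    ∃ l₁ ∈ Set.Ioo (-(1 / 2) : ℝ) 0, ∃ l₂ ∈ Set.Ioo (-(5 / 4) : ℝ) (-1),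
      IntervalIntegrable
        (fun x : ℝ => (x + l₁) /
          (Real.sqrt x * Real.sqrt (2 - x) * Real.sqrt (1 / 2 - x)))
        volume 0 (1 / 2) ∧
      IntervalIntegrable
        (fun x : ℝ => (x + l₂) /
          (Real.sqrt x * Real.sqrt (2 - x) * Real.sqrt (x - 1 / 2)))
        volume (1 / 2) 2 ∧
      (∫ x in (0 : ℝ)..(1 / 2), (x + l₁) /
          (Real.sqrt x * Real.sqrt (2 - x) * Real.sqrt (1 / 2 - x))) = 0 ∧
      (∫ x in (1 / 2 : ℝ)..2, (x + l₂) /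
          (Real.sqrt x * Real.sqrt (2 - x) * Real.sqrt (x - 1 / 2))) = 0 := by
  set I1 := ∫ x in (0:ℝ)..(1/2), x / d1 x with hI1_def
  set J1 := ∫ x in (0:ℝ)..(1/2), 1 / d1 x with hJ1_def
  set I2 := ∫ x in (1/2:ℝ)..2, x / d2 x with hI2_def
  set J2 := ∫ x in (1/2:ℝ)..2, 1 / d2 x with hJ2_def
  have hJ1 := J1_pos
  have hI1 := I1_pos
  have hK1 : 0 < 1/2 * J1 - I1 := by rw [← K1_eq]; exact K1_pos
  have hJ2 := J2_pos
  have hA2 : 0 < I2 - J2 := by rw [← A2_eq]; exact A2_pos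
  have hB2 : 0 < 5/4 * J2 - I2 := by rw [← B2_eq]; exact B2_pos
  refine ⟨-(I1 / J1), ⟨?_, ?_⟩, -(I2 / J2), ⟨?_, ?_⟩, ?_, ?_, ?_, ?_⟩
  · have : I1 / J1 < 1/2 := (div_lt_iff₀ hJ1).mpr (by linarith)
    norm_num
    linarith
  · simp only [neg_lt, neg_zero]
    exact div_pos hI1 hJ1
  · have : I2 / J2 < 5/4 := (div_lt_iff₀ hJ2).mpr (by linarith)
    norm_num
    linarith
  · have : 1 < I2 / J2 := (one_lt_div hJ2).mpr (by linarith)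
    linarith
  · exact int_d1 (by fun_prop) (C := 1/2 + |(-(I1/J1))|)
      (fun x hx => le_trans (abs_add_le _ _) (by
        have : |x| ≤ 1/2 := abs_le.mpr ⟨by linarith [hx.1], by linarith [hx.2]⟩
        linarith))
  · exact int_d2 (by fun_prop) (C := 2 + |(-(I2/J2))|)
      (fun x hx => le_trans (abs_add_le _ _) (by
        have : |x| ≤ 2 := abs_le.mpr ⟨by linarith [hx.1], by linarith [hx.2]⟩
        linarith))
  · have hfe : (fun x : ℝ => (x + -(I1/J1)) / d1 x)
        = fun x => x / d1 x + (-(I1/J1)) * (1 / d1 x) := by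
      funext x; rw [add_div, mul_one_div]
    show (∫ x in (0:ℝ)..(1/2), (x + -(I1/J1)) / d1 x) = 0
    rw [hfe, intervalIntegral.integral_add hI1_int (hJ1_int.const_mul _),
      intervalIntegral.integral_const_mul]
    rw [← hI1_def, ← hJ1_def]
    field_simp
    rw [div_self (show J1 ≠ 0 from hJ1.ne')]; ring
  · have hfe : (fun x : ℝ => (x + -(I2/J2)) / d2 x)
        = fun x => x / d2 x + (-(I2/J2)) * (1 / d2 x) := by
      funext x; rw [add_div, mul_one_div]
    show (∫ x in (1/2:ℝ)..2, (x + -(I2/J2)) / d2 x) = 0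
    rw [hfe, intervalIntegral.integral_add hI2_int (hJ2_int.const_mul _),
      intervalIntegral.integral_const_mul]
    rw [← hI2_def, ← hJ2_def]
    field_simp
    rw [div_self (show J2 ≠ 0 from hJ2.ne')]; ring
end

section
/- There exists a real number λ ∈ (0, 1) such that ∫_{−1}^{0} (x + λ) / ( √(−x) · √(1−x) · √(1+x) ) dx = 0 (the integral being a convergent improper Riemann/Lebesgue integral). -/
open MeasureTheory intervalIntegral

lemma aux_inv_sqrt (y : ℝ) : (Real.sqrt y)⁻¹ = y ^ (-(1/2) : ℝ) := by
  rcases lt_or_ge y 0 with h | h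
  · rw [Real.sqrt_eq_zero'.mpr h.le, Real.rpow_def_of_neg h]
    simp only [show (-(1/2:ℝ)) * Real.pi = -(Real.pi/2) by ring, Real.cos_neg,
      show (Real.pi/2 : ℝ) = Real.pi/2 by rfl, Real.cos_pi_div_two, mul_zero, inv_zero]
  · rw [Real.rpow_neg h, ← Real.sqrt_eq_rpow]

lemma aux_key {a b : ℝ} (ha : 0 < a) (hb : 0 < b) (hab : a + b = 1) :
    (Real.sqrt a * Real.sqrt b)⁻¹ ≤
      Real.sqrt 2 * ((Real.sqrt a)⁻¹ + (Real.sqrt b)⁻¹) := by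
  have h2 : (0:ℝ) < Real.sqrt 2 := Real.sqrt_pos.mpr (by norm_num)
  have hsa : 0 < Real.sqrt a := Real.sqrt_pos.mpr ha
  have hsb : 0 < Real.sqrt b := Real.sqrt_pos.mpr hb
  rcases le_total a b with h | h
  · have hb2 : (1/2 : ℝ) ≤ b := by linarith
    have h1 : (Real.sqrt 2)⁻¹ ≤ Real.sqrt b := by
      rw [show ((Real.sqrt 2)⁻¹ : ℝ) = Real.sqrt 2⁻¹ from (Real.sqrt_inv 2).symm]
      exact Real.sqrt_le_sqrt (by linarith)
    have h3 : (Real.sqrt b)⁻¹ ≤ Real.sqrt 2 := by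
      rw [inv_le_comm₀ hsb h2]
      simpa using h1
    rw [mul_inv]
    have h4 : (Real.sqrt a)⁻¹ * (Real.sqrt b)⁻¹ ≤ (Real.sqrt a)⁻¹ * Real.sqrt 2 :=
      mul_le_mul_of_nonneg_left h3 (inv_nonneg.mpr hsa.le)
    have h5 : 0 ≤ Real.sqrt 2 * (Real.sqrt b)⁻¹ := by positivity
    nlinarith
  · have hb2 : (1/2 : ℝ) ≤ a := by linarith
    have h1 : (Real.sqrt 2)⁻¹ ≤ Real.sqrt a := by
      rw [show ((Real.sqrt 2)⁻¹ : ℝ) = Real.sqrt 2⁻¹ from (Real.sqrt_inv 2).symm]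
      exact Real.sqrt_le_sqrt (by linarith)
    have h3 : (Real.sqrt a)⁻¹ ≤ Real.sqrt 2 := by
      rw [inv_le_comm₀ hsa h2]
      simpa using h1
    rw [mul_inv]
    have h4 : (Real.sqrt a)⁻¹ * (Real.sqrt b)⁻¹ ≤ Real.sqrt 2 * (Real.sqrt b)⁻¹ :=
      mul_le_mul_of_nonneg_right h3 (inv_nonneg.mpr hsb.le)
    have h5 : 0 ≤ Real.sqrt 2 * (Real.sqrt a)⁻¹ := by positivity
    nlinarith

lemma aux_meas : Measurable
    (fun x : ℝ => Real.sqrt (-x) * Real.sqrt (1 - x) * Real.sqrt (1 + x)) := by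
  fun_prop

lemma aux_bound {x : ℝ} (hx : x ∈ Set.Ioc (-1 : ℝ) 0) :
    (Real.sqrt (-x) * Real.sqrt (1 - x) * Real.sqrt (1 + x))⁻¹ ≤
      Real.sqrt 2 * ((Real.sqrt (-x))⁻¹ + (Real.sqrt (1 + x))⁻¹) := by
  rcases eq_or_lt_of_le hx.2 with h0 | h0
  · subst h0
    simp
  · have ha : (0:ℝ) < -x := by linarith
    have hb : (0:ℝ) < 1 + x := by linarith [hx.1]
    have hsa : 0 < Real.sqrt (-x) := Real.sqrt_pos.mpr ha
    have hsb : 0 < Real.sqrt (1 + x) := Real.sqrt_pos.mpr hb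
    have hmid : (1:ℝ) ≤ Real.sqrt (1 - x) := by
      have h := Real.sqrt_le_sqrt (show (1:ℝ) ≤ 1 - x by linarith)
      rwa [Real.sqrt_one] at h
    have hle : Real.sqrt (-x) * Real.sqrt (1 + x) ≤
        Real.sqrt (-x) * Real.sqrt (1 - x) * Real.sqrt (1 + x) := by
      have h := mul_le_mul_of_nonneg_right
        (mul_le_mul_of_nonneg_left hmid hsa.le) hsb.le
      simpa using h
    have h1 : (Real.sqrt (-x) * Real.sqrt (1 - x) * Real.sqrt (1 + x))⁻¹ ≤
        (Real.sqrt (-x) * Real.sqrt (1 + x))⁻¹ :=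
      inv_anti₀ (by positivity) hle
    exact h1.trans (aux_key ha hb (by ring))

lemma aux_dom_int : IntervalIntegrable
    (fun x : ℝ => Real.sqrt 2 * ((Real.sqrt (-x))⁻¹ + (Real.sqrt (1 + x))⁻¹))
    volume (-1) 0 := by
  have h1 : IntervalIntegrable (fun x : ℝ => (Real.sqrt (-x))⁻¹) volume (-1) 0 := by
    simp only [aux_inv_sqrt]
    have h := intervalIntegrable_rpow' (a := (1:ℝ)) (b := 0)
      (r := -(1/2)) (by norm_num)
    have h' := (IntervalIntegrable.iff_comp_neg (a := (1:ℝ)) (b := 0)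
      (f := fun x : ℝ => x ^ (-(1/2):ℝ))).mp h
    simpa using h'
  have h2 : IntervalIntegrable (fun x : ℝ => (Real.sqrt (1 + x))⁻¹) volume (-1) 0 := by
    simp only [aux_inv_sqrt]
    have h := intervalIntegrable_rpow' (a := (0:ℝ)) (b := 1)
      (r := -(1/2)) (by norm_num)
    have h' := h.comp_add_left 1
    simpa using h'
  exact (h1.add h2).const_mul _

lemma aux_int1 : IntervalIntegrable
    (fun x : ℝ => 1 / (Real.sqrt (-x) * Real.sqrt (1 - x) * Real.sqrt (1 + x)))
    volume (-1) 0 := by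
  apply aux_dom_int.mono_fun'
  · exact ((measurable_const.div aux_meas)).aestronglyMeasurable
  · rw [Set.uIoc_of_le (by norm_num : (-1:ℝ) ≤ 0)]
    filter_upwards [ae_restrict_mem measurableSet_Ioc] with x hx
    have hg : 0 ≤ Real.sqrt (-x) * Real.sqrt (1 - x) * Real.sqrt (1 + x) := by positivity
    rw [Real.norm_eq_abs, one_div, abs_of_nonneg (inv_nonneg.mpr hg)]
    exact aux_bound hx

lemma aux_int_gen (c : ℝ) (hc : |c| ≤ 1) : IntervalIntegrable
    (fun x : ℝ => (x + c) / (Real.sqrt (-x) * Real.sqrt (1 - x) * Real.sqrt (1 + x)))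
    volume (-1) 0 := by
  apply (aux_int1.const_mul 2).mono_fun'
  · exact ((measurable_id.add_const c).div aux_meas).aestronglyMeasurable
  · rw [Set.uIoc_of_le (by norm_num : (-1:ℝ) ≤ 0)]
    filter_upwards [ae_restrict_mem measurableSet_Ioc] with x hx
    have hg : 0 ≤ Real.sqrt (-x) * Real.sqrt (1 - x) * Real.sqrt (1 + x) := by positivity
    have hxa : |x| ≤ 1 := abs_le.mpr ⟨by linarith [hx.1], by linarith [hx.2]⟩
    have habs : |x + c| ≤ 2 := (abs_add_le x c).trans (by linarith)
    rcases eq_or_lt_of_le hg with h0 | h0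
    · rw [Real.norm_eq_abs, abs_div, ← h0]
      simp
    · rw [Real.norm_eq_abs, abs_div, abs_of_nonneg hg, mul_one_div]
      exact div_le_div_of_nonneg_right habs h0.le

lemma aux_pos_on {x : ℝ} (hx : x ∈ Set.Ioo (-1 : ℝ) 0) :
    0 < Real.sqrt (-x) * Real.sqrt (1 - x) * Real.sqrt (1 + x) := by
  have h1 : 0 < Real.sqrt (-x) := Real.sqrt_pos.mpr (by linarith [hx.2])
  have h2 : 0 < Real.sqrt (1 - x) := Real.sqrt_pos.mpr (by linarith [hx.2])
  have h3 : 0 < Real.sqrt (1 + x) := Real.sqrt_pos.mpr (by linarith [hx.1])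
  positivity

/-- Period-closing condition for the harmonic torus with a single end of type
`(2,2,3)`: there exists `λ ∈ (0,1)` making the period integral vanish. -/
theorem stmt_17 :
    ∃ l ∈ Set.Ioo (0 : ℝ) 1,
      IntervalIntegrable
        (fun x : ℝ => (x + l) /
          (Real.sqrt (-x) * Real.sqrt (1 - x) * Real.sqrt (1 + x)))
        volume (-1) 0 ∧
      (∫ x in (-1 : ℝ)..0, (x + l) /
          (Real.sqrt (-x) * Real.sqrt (1 - x) * Real.sqrt (1 + x))) = 0 := by
  set g : ℝ → ℝ := fun x => Real.sqrt (-x) * Real.sqrt (1 - x) * Real.sqrt (1 + x) with hg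
  have hI1 : IntervalIntegrable (fun x : ℝ => 1 / g x) volume (-1) 0 := aux_int1
  have hI2 : IntervalIntegrable (fun x : ℝ => x / g x) volume (-1) 0 := by
    have := aux_int_gen 0 (by norm_num)
    simpa using this
  set A : ℝ := ∫ x in (-1 : ℝ)..0, 1 / g x with hA
  set B : ℝ := ∫ x in (-1 : ℝ)..0, x / g x with hB
  have hApos : 0 < A := by
    apply intervalIntegral_pos_of_pos_on hI1 _ (by norm_num)
    intro x hx
    exact div_pos one_pos (aux_pos_on hx)
  have hBneg : B < 0 := by
    have h : 0 < ∫ x in (-1 : ℝ)..0, -(x / g x) :=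
      intervalIntegral_pos_of_pos_on hI2.neg
        (fun x hx => by
          have hgx := aux_pos_on hx
          have hx0 : (0:ℝ) < -x := by linarith [hx.2]
          have hrw : -(x / g x) = (-x) / g x := by ring
          rw [hrw]
          exact div_pos hx0 hgx) (by norm_num)
    rw [intervalIntegral.integral_neg] at h
    linarith
  have hAB : 0 < A + B := by
    have h : 0 < ∫ x in (-1 : ℝ)..0, (1 / g x + x / g x) :=
      intervalIntegral_pos_of_pos_on (hI1.add hI2)
        (fun x hx => by
          rw [← add_div]
          exact div_pos (by linarith [hx.1]) (aux_pos_on hx)) (by norm_num)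
    rwa [intervalIntegral.integral_add hI1 hI2] at h
  refine ⟨-B / A, ⟨div_pos (by linarith) hApos, (div_lt_one hApos).mpr (by linarith)⟩, ?_, ?_⟩
  · exact aux_int_gen _ (abs_le.mpr ⟨by
      rw [le_div_iff₀ hApos]; nlinarith, by
      rw [div_le_iff₀ hApos]; nlinarith⟩)
  · have hfun : (fun x : ℝ => (x + -B / A) / g x) =
        fun x : ℝ => x / g x + (-B / A) * (1 / g x) := by
      funext x
      rw [add_div, mul_one_div]
    calc (∫ x in (-1 : ℝ)..0, (x + -B / A) / g x)
        = ∫ x in (-1 : ℝ)..0, (x / g x + (-B / A) * (1 / g x)) := by rw [hfun]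
      _ = B + (-B / A) * A := by
          rw [intervalIntegral.integral_add hI2 (hI1.const_mul _),
            intervalIntegral.integral_const_mul]
      _ = 0 := by field_simp; ring
end

section
/- Let n ≥ 2 be an integer and c ∈ ℝ, and define f : ℂ∖{0} → ℝ³ by f(z) = (Re z, Re(z²)/2 − c·Im(z^{n+1})/(n+1), log|z|). Then the following are equivalent: (i) c ≠ 0; (ii) there exists ε > 0 such that f is an immersion on the punctured disk {z : 0 < |z| < ε}, i.e. its real derivative is injective at every such point. Indeed, the second coordinate of f_x × f_y equals −y/(x²+y²), so f can only be singular on the real axis y = 0, where f_x × f_y = c·(x^{n−1}, 0, xⁿ) up to sign. -/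
open Complex Filter Function

lemma key (n : ℕ) (c : ℝ) (z : ℂ) (hz : z ≠ 0) :
    ∃ L : ℂ →L[ℝ] ℝ × ℝ × ℝ,
      HasFDerivAt (fun z : ℂ =>
        (z.re, (z ^ 2).re / 2 - c * (z ^ (n + 1)).im / ((n : ℝ) + 1),
          Real.log (‖z‖))) L z ∧
      ∀ w, L w = (w.re, (z * w).re - c * (z ^ n * w).im,
        (z.re * w.re + z.im * w.im) / Complex.normSq z) := by
  have hns : Complex.normSq z ≠ 0 := by simpa using hz
  -- component 2
  have ha : HasFDerivAt (fun z : ℂ => z ^ 2)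
      (((1 : ℂ →L[ℂ] ℂ).smulRight ((2 : ℂ) * z ^ 1)).restrictScalars ℝ) z :=
    ((hasDerivAt_pow 2 z).hasFDerivAt).restrictScalars ℝ
  have ha' : HasFDerivAt (fun z : ℂ => (z ^ 2).re / 2)
      (((2:ℝ)⁻¹) • (Complex.reCLM.comp (((1 : ℂ →L[ℂ] ℂ).smulRight ((2 : ℂ) * z ^ 1)).restrictScalars ℝ))) z := by
    have := (Complex.reCLM.hasFDerivAt.comp z ha).const_mul ((2:ℝ)⁻¹)
    simpa [div_eq_inv_mul, smul_smul] using this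
  have hb : HasFDerivAt (fun z : ℂ => z ^ (n+1))
      (((1 : ℂ →L[ℂ] ℂ).smulRight (((n:ℂ)+1) * z ^ n)).restrictScalars ℝ) z := by
    have := ((hasDerivAt_pow (n+1) z).hasFDerivAt).restrictScalars ℝ
    simpa [ContinuousLinearMap.smulRight_one_eq_toSpanSingleton] using this
  have hb' : HasFDerivAt (fun z : ℂ => c * (z ^ (n+1)).im / ((n:ℝ)+1))
      ((c / ((n:ℝ)+1)) • (Complex.imCLM.comp (((1 : ℂ →L[ℂ] ℂ).smulRight (((n:ℂ)+1) * z ^ n)).restrictScalars ℝ))) z := by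
    have := ((Complex.imCLM.hasFDerivAt.comp z hb).const_mul c).const_mul (((n:ℝ)+1)⁻¹)
    simpa [div_eq_inv_mul, smul_smul, mul_comm] using this
  have h2 := ha'.sub hb'
  -- component 3
  have hc1 : HasFDerivAt (fun z : ℂ => Complex.normSq z)
      (z.re • Complex.reCLM + z.re • Complex.reCLM + (z.im • Complex.imCLM + z.im • Complex.imCLM)) z := by
    have hre : HasFDerivAt (fun z : ℂ => z.re) Complex.reCLM z := Complex.reCLM.hasFDerivAt
    have him : HasFDerivAt (fun z : ℂ => z.im) Complex.imCLM z := Complex.imCLM.hasFDerivAt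
    have := (hre.mul hre).add (him.mul him)
    simpa [Complex.normSq_apply, Pi.mul_def, Pi.add_def] using this
  have hc2 : HasFDerivAt (fun z : ℂ => Real.log (Complex.normSq z) / 2)
      ((2:ℝ)⁻¹ • ((Complex.normSq z)⁻¹ • (z.re • Complex.reCLM + z.re • Complex.reCLM + (z.im • Complex.imCLM + z.im • Complex.imCLM)))) z := by
    have := ((Real.hasDerivAt_log hns).comp_hasFDerivAt z hc1).const_mul ((2:ℝ)⁻¹)
    simpa [div_eq_inv_mul, smul_smul] using this
  have h3 : HasFDerivAt (fun z : ℂ => Real.log (‖z‖))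
      ((2:ℝ)⁻¹ • ((Complex.normSq z)⁻¹ • (z.re • Complex.reCLM + z.re • Complex.reCLM + (z.im • Complex.imCLM + z.im • Complex.imCLM)))) z := by
    have heq : (fun z : ℂ => Real.log (‖z‖)) = fun z : ℂ => Real.log (Complex.normSq z) / 2 := by
      funext w
      rw [← Complex.sq_norm, Real.log_pow]
      push_cast; ring
    rw [heq]; exact hc2
  refine ⟨_, (HasFDerivAt.prodMk Complex.reCLM.hasFDerivAt (h2.prodMk h3)), ?_⟩
  intro w
  simp only [ContinuousLinearMap.prod_apply, ContinuousLinearMap.coe_sub',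
    ContinuousLinearMap.coe_smul', Pi.smul_apply, Pi.sub_apply,
    ContinuousLinearMap.comp_apply, ContinuousLinearMap.coe_restrictScalars',
    ContinuousLinearMap.smulRight_apply, ContinuousLinearMap.one_apply,
    ContinuousLinearMap.add_apply, Complex.reCLM_apply, Complex.imCLM_apply,
    smul_eq_mul, Complex.mul_re, Complex.mul_im, Complex.smul_re, Complex.smul_im]
  simp only [Prod.mk.injEq]
  refine ⟨trivial, ?_, ?_⟩
  · have hn1 : ((n:ℝ)+1) ≠ 0 := by positivity
    field_simp
    simp only [Complex.re_ofNat, Complex.im_ofNat, Complex.add_re, Complex.add_im, Complex.one_re,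
      Complex.one_im, Complex.natCast_re, Complex.natCast_im]
    ring
  · field_simp
    ring

/-- Regularity of a harmonic end of order 1 depends on higher-order terms:
the end with data `ω₁ = dz`, `ω₂ = (z + c·i·zⁿ)dz`, `ω₃ = dz/z` is an
immersion on some punctured disk around `0` if and only if `c ≠ 0`. -/
theorem stmt_18 (n : ℕ) (hn : 2 ≤ n) (c : ℝ) (f : ℂ → ℝ × ℝ × ℝ)
    (hf : ∀ z, f z =
      (z.re, (z ^ 2).re / 2 - c * (z ^ (n + 1)).im / ((n : ℝ) + 1),
        Real.log (‖z‖))) :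
    c ≠ 0 ↔
      ∃ ε > (0 : ℝ), ∀ z : ℂ, 0 < ‖z‖ → ‖z‖ < ε →
        Function.Injective (fderiv ℝ f z) := by
  have hfe : f = fun z : ℂ =>
      (z.re, (z ^ 2).re / 2 - c * (z ^ (n + 1)).im / ((n : ℝ) + 1),
        Real.log (‖z‖)) := funext hf
  subst hfe
  constructor
  · intro hc
    refine ⟨1, one_pos, fun z hz0 _ => ?_⟩
    have hz : z ≠ 0 := by
      intro h; rw [h] at hz0; simp at hz0
    have hns : Complex.normSq z ≠ 0 := by simpa using hz
    obtain ⟨L, hL, hLw⟩ := key n c z hz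
    rw [hL.fderiv]
    intro w₁ w₂ hw
    have h0 : L (w₁ - w₂) = 0 := by rw [map_sub, hw, sub_self]
    rw [hLw] at h0
    rw [Prod.ext_iff, Prod.ext_iff] at h0
    obtain ⟨e1, e2, e3⟩ := h0
    simp only [Prod.fst_zero, Prod.snd_zero] at e1 e2 e3
    set w := w₁ - w₂ with hwdef
    have him : z.im * w.im = 0 := by
      have := e3
      rw [div_eq_zero_iff] at this
      rcases this with h | h
      · rw [e1] at h; linarith [h]
      · exact absurd h hns
    have hwim : w.im = 0 := by
      by_contra hwim
      have hzim : z.im = 0 := by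
        rcases mul_eq_zero.mp him with h | h
        · exact h
        · exact absurd h hwim
      -- from e2
      have e2' : (z * w).re - c * (z ^ n * w).im = 0 := e2
      rw [Complex.mul_re, Complex.mul_im, e1, hzim] at e2'
      have hre : (z ^ n).re = z.re ^ n := by
        have : z = (z.re : ℂ) := by
          apply Complex.ext <;> simp [hzim]
        rw [this]; simp [← Complex.ofReal_pow]
      have hzre : z.re ≠ 0 := by
        intro h
        apply hz
        apply Complex.ext <;> simp [h, hzim]
      have : c * (z.re ^ n * w.im) = 0 := by
        rw [hre] at e2'; nlinarith [e2']
      rcases mul_eq_zero.mp this with h | h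
      · exact hc h
      · rcases mul_eq_zero.mp h with h' | h'
        · exact pow_ne_zero n hzre h'
        · exact hwim h'
    have : w = 0 := Complex.ext e1 hwim
    have := sub_eq_zero.mp this
    exact this
  · rintro ⟨ε, hε, h⟩ hc0
    subst hc0
    set z : ℂ := ((ε / 2 : ℝ) : ℂ) with hzdef
    have habs : ‖z‖ = ε / 2 := by
      rw [hzdef, Complex.norm_real, Real.norm_eq_abs, abs_of_pos (by linarith)]
    have h1 : 0 < ‖z‖ := by rw [habs]; linarith
    have h2 : ‖z‖ < ε := by rw [habs]; linarith
    have hz : z ≠ 0 := by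
      intro hz; rw [hz] at h1; simp at h1
    obtain ⟨L, hL, hLw⟩ := key n 0 z hz
    have hinj := h z h1 h2
    rw [hL.fderiv] at hinj
    have hLI : L Complex.I = L 0 := by
      rw [map_zero, hLw]
      have hzim : z.im = 0 := by simp [hzdef]
      simp [Complex.mul_re, Complex.mul_im, hzim]
    exact Complex.I_ne_zero (hinj hLI)
end

section
/- Define f : ℂ∖{0} → ℝ³ by f(z) = (Re z, log|z|, −Re(1/z) − Im(z²)/2). Then for every real t > 0 one has f(it) = f(−it) = (0, log t, 0); consequently f is not injective on any punctured neighborhood of 0. -/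
open Complex Filter Function

lemma key_s19 (f : ℂ → ℝ × ℝ × ℝ)
    (hf : ∀ z, f z =
      (z.re, Real.log (‖z‖), -(1 / z).re - (z ^ 2).im / 2))
    (t : ℝ) (ht : 0 < t) :
    f ((t : ℂ) * I) = f (-((t : ℂ) * I)) ∧
      f ((t : ℂ) * I) = (0, Real.log t, 0) := by
  have habs : ‖(t : ℂ) * I‖ = t := by
    simp [Complex.norm_def, Complex.normSq_apply, Real.sqrt_mul_self ht.le, ht.le]
  have habs' : ‖-((t : ℂ) * I)‖ = t := by
    rw [norm_neg]; exact habs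
  have hval : f ((t : ℂ) * I) = (0, Real.log t, 0) := by
    rw [hf, habs]
    have ht0 : ((t : ℂ) * I) ≠ 0 := by
      simp [Complex.ext_iff, ht.ne']
    refine Prod.ext ?_ (Prod.ext ?_ ?_) <;> simp [Complex.div_re, Complex.normSq_apply, sq]
  have hval' : f (-((t : ℂ) * I)) = (0, Real.log t, 0) := by
    rw [hf, habs']
    refine Prod.ext ?_ (Prod.ext ?_ ?_) <;> simp [Complex.div_re, Complex.normSq_apply, sq]
  exact ⟨hval.trans hval'.symm, hval⟩

/-- The end of type `(0,1,2)` with data `ω₃ = (1/z² + iz)dz` is not embedded: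
`f(it) = f(-it) = (0, log t, 0)` for all `t > 0`, so `f` is not injective on
any punctured neighborhood of `0`. -/
theorem stmt_19 (f : ℂ → ℝ × ℝ × ℝ)
    (hf : ∀ z, f z =
      (z.re, Real.log (‖z‖), -(1 / z).re - (z ^ 2).im / 2)) :
    (∀ t : ℝ, 0 < t →
      f ((t : ℂ) * I) = f (-((t : ℂ) * I)) ∧
      f ((t : ℂ) * I) = (0, Real.log t, 0)) ∧
    (∀ ε > (0 : ℝ),
      ¬ Set.InjOn f {z : ℂ | 0 < ‖z‖ ∧ ‖z‖ < ε}) := by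
  refine ⟨fun t ht => key_s19 f hf t ht, fun ε hε hinj => ?_⟩
  set t : ℝ := ε / 2 with htdef
  have ht : 0 < t := by positivity
  have habs : ‖(t : ℂ) * I‖ = t := by
    simp [Complex.norm_def, Complex.normSq_apply, Real.sqrt_mul_self ht.le, ht.le]
  have hmem : ((t : ℂ) * I) ∈ {z : ℂ | 0 < ‖z‖ ∧ ‖z‖ < ε} := by
    constructor <;> rw [habs] <;> [exact ht; linarith]
  have hmem' : -((t : ℂ) * I) ∈ {z : ℂ | 0 < ‖z‖ ∧ ‖z‖ < ε} := by
    simpa [norm_neg] using hmem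
  have heq := hinj hmem hmem' (key_s19 f hf t ht).1
  have him := congrArg Complex.im heq
  simp at him
  linarith
end
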